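/- Let a, b, c, d be positive integers (c ≥ 0 allowed) with ad - bc = l > 0, b > 0, a > 0. For positive reals x ≠ y such that all arguments lie in ℝ_{>0} \ {1}, the five-term relation implies: L((x+c/a)/(x+d/b)) - L((y+c/a)/(y+d/b)) + L(((ay+c)(bx+d))/((by+d)(ax+c))) ≡ L((bx+d)/(by+d)) - L((ax+c)/(ay+c)) mod π²/6. -/

import Mathlib

open Real

open Filter Set Topology

noncomputable def Li2 (x : ℝ) : ℝ := ∑' n : ℕ, x ^ (n + 1) / (n + 1) ^ 2

lemma aux_summable : Summable (fun n : ℕ => 1 / ((n : ℝ) + 1) ^ 2) := by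
  have h := Real.summable_one_div_nat_pow.mpr (show 1 < 2 by norm_num)
  have h2 := (summable_nat_add_iff 1).mpr h
  refine h2.congr fun n => ?_
  push_cast
  ring

lemma li2_summable {x : ℝ} (hx : |x| ≤ 1) :
    Summable (fun n : ℕ => x ^ (n + 1) / ((n : ℝ) + 1) ^ 2) := by
  refine Summable.of_norm_bounded aux_summable fun n => ?_
  rw [norm_div, norm_pow, Real.norm_eq_abs]
  have h1 : |x| ^ (n + 1) ≤ 1 := pow_le_one₀ (abs_nonneg x) hx
  have h2 : (0:ℝ) < ((n:ℝ)+1)^2 := by positivity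
  rw [show ‖((n:ℝ)+1)^2‖ = ((n:ℝ)+1)^2 from abs_of_pos h2]
  gcongr

lemma li2_zero : Li2 0 = 0 := by
  simp [Li2]

lemma li2_one : Li2 1 = π ^ 2 / 6 := by
  have h := hasSum_zeta_two
  have h2 := (hasSum_nat_add_iff' (f := fun n : ℕ => (1:ℝ) / (n:ℝ)^2) 1).mpr h
  simp only [Finset.range_one, Finset.sum_singleton, Nat.cast_zero] at h2
  norm_num at h2
  have h3 : Li2 1 = ∑' n : ℕ, (1:ℝ) / ((n:ℝ) + 1) ^ 2 := by
    unfold Li2; congr 1; funext n; norm_num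
  rw [h3]
  have := h2.tsum_eq
  rw [← this]
  congr 1; funext n; norm_num

lemma li2_hasDerivAt' {x : ℝ} (hx : x ∈ Set.Ioo (-1:ℝ) 1) :
    HasDerivAt Li2 (∑' n : ℕ, x ^ n / ((n : ℝ) + 1)) x := by
  have habs : |x| < 1 := abs_lt.mpr ⟨hx.1, hx.2⟩
  set r : ℝ := (1 + |x|) / 2 with hr_def
  have hr0 : 0 ≤ r := by positivity
  have hxr : |x| < r := by rw [hr_def]; linarith
  have hr1 : r < 1 := by rw [hr_def]; linarith
  have key := hasDerivAt_tsum_of_isPreconnected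
    (u := fun n : ℕ => r ^ n) (𝕜 := ℝ) (F := ℝ)
    (g := fun (n : ℕ) (y : ℝ) => y ^ (n + 1) / ((n : ℝ) + 1) ^ 2)
    (g' := fun (n : ℕ) (y : ℝ) => y ^ n / ((n : ℝ) + 1))
    (t := Set.Ioo (-r) r) (y₀ := 0) (y := x)
    (summable_geometric_of_lt_one hr0 hr1) isOpen_Ioo
    (convex_Ioo _ _).isPreconnected
    ?_ ?_ ?_ ?_ ?_
  · exact key
  · intro n y _
    have h := (hasDerivAt_pow (n + 1) y).div_const (((n : ℝ) + 1) ^ 2)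
    refine h.congr_deriv ?_
    have hne : ((n : ℝ) + 1) ≠ 0 := by positivity
    push_cast [Nat.add_sub_cancel]
    field_simp
  · intro n y hy
    have hyr : |y| ≤ r := le_of_lt (abs_lt.mpr ⟨hy.1, hy.2⟩)
    rw [Real.norm_eq_abs, abs_div]
    have h1 : |y| ^ n ≤ r ^ n := pow_le_pow_left₀ (abs_nonneg y) hyr n
    have h2 : (1:ℝ) ≤ |(n : ℝ) + 1| := by
      rw [abs_of_pos (by positivity)]; linarith [Nat.cast_nonneg (α := ℝ) n]
    calc |y ^ n| / |(n : ℝ) + 1| ≤ |y ^ n| / 1 := by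
          gcongr
      _ = |y| ^ n := by rw [div_one, abs_pow]
      _ ≤ r ^ n := h1
  · exact ⟨by linarith [abs_nonneg x, hxr], by linarith [abs_nonneg x, hxr]⟩
  · refine (summable_zero).congr fun n => ?_
    simp
  · exact abs_lt.mp hxr

lemma li2_hasDerivAt {x : ℝ} (hx : x ∈ Set.Ioo (0:ℝ) 1) :
    HasDerivAt Li2 (-Real.log (1 - x) / x) x := by
  have h := li2_hasDerivAt' (x := x) ⟨by linarith [hx.1], hx.2⟩
  have habs : |x| < 1 := abs_lt.mpr ⟨by linarith [hx.1], hx.2⟩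
  have hs := (hasSum_pow_div_log_of_abs_lt_one habs).div_const x
  have he : (fun n : ℕ => x ^ (n + 1) / ((n : ℝ) + 1) / x) = fun n : ℕ => x ^ n / ((n : ℝ) + 1) := by
    funext n
    have hx0 : x ≠ 0 := ne_of_gt hx.1
    field_simp
    ring
  rw [he] at hs
  rwa [hs.tsum_eq] at h

lemma li2_continuousOn : ContinuousOn Li2 (Set.Icc (-1:ℝ) 1) := by
  have : ContinuousOn (fun x : ℝ => ∑' n : ℕ, x ^ (n + 1) / ((n : ℝ) + 1) ^ 2)
      (Set.Icc (-1:ℝ) 1) := by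
    refine continuousOn_tsum (fun n => ?_) aux_summable (fun n x hx => ?_)
    · exact ((continuous_pow (n+1)).div_const _).continuousOn
    · rw [norm_div, norm_pow, Real.norm_eq_abs, Real.norm_eq_abs,
        abs_of_pos (show (0:ℝ) < ((n:ℝ)+1)^2 by positivity)]
      have hx1 : |x| ≤ 1 := abs_le.mpr ⟨hx.1, hx.2⟩
      gcongr
      exact pow_le_one₀ (abs_nonneg x) hx1
  exact this

noncomputable def rogersL (x : ℝ) : ℝ :=
  if x < 1 then Li2 x + (1 / 2) * Real.log x * Real.log (1 - x)
  else Real.pi ^ 2 / 3 - (Li2 (1 / x) + (1 / 2) * Real.log (1 / x) * Real.log (1 - 1 / x))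

lemma rogersL_hasDerivAt {x : ℝ} (hx : x ∈ Set.Ioo (0:ℝ) 1) :
    HasDerivAt rogersL (-(Real.log (1 - x) / x + Real.log x / (1 - x)) / 2) x := by
  have hx0 : x ≠ 0 := ne_of_gt hx.1
  have hx1 : (1:ℝ) - x ≠ 0 := by have := hx.2; intro h; linarith [sub_eq_zero.mp h]
  have hx1' : (0:ℝ) < 1 - x := by linarith [hx.2]
  have hlog1 : HasDerivAt (fun y : ℝ => Real.log (1 - y)) (-(1 - x)⁻¹) x := by
    have h := (Real.hasDerivAt_log hx1).comp x (((hasDerivAt_id x).const_sub 1))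
    have h2 : ((1 - x)⁻¹ * -1) = -(1 - x)⁻¹ := by ring
    rw [h2] at h
    exact h
  have hmul : HasDerivAt (fun y : ℝ => (1/2 : ℝ) * Real.log y * Real.log (1 - y))
      ((1/2) * (x⁻¹ * Real.log (1 - x) + Real.log x * -(1 - x)⁻¹)) x := by
    have h := (((Real.hasDerivAt_log hx0).const_mul (1/2 : ℝ)).mul hlog1)
    refine h.congr_deriv ?_
    ring
  have htot := (li2_hasDerivAt hx).add hmul
  have hev : (fun y => Li2 y + (1/2 : ℝ) * Real.log y * Real.log (1 - y)) =ᶠ[nhds x] rogersL := by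
    filter_upwards [Iio_mem_nhds hx.2] with y hy
    simp only [rogersL, if_pos (show y < 1 from hy)]
  refine (htot.congr_of_eventuallyEq hev.symm).congr_deriv ?_
  field_simp
  ring

lemma const_of_deriv {f : ℝ → ℝ} (hD : ∀ s ∈ Set.Ioo (0:ℝ) 1, HasDerivAt f 0 s) {c : ℝ}
    (hlim : Tendsto f (𝓝[>] (0:ℝ)) (𝓝 c)) : ∀ x ∈ Set.Ioo (0:ℝ) 1, f x = c := by
  intro x hx
  have key : ∀ s ∈ Set.Ioo (0:ℝ) x, f s = f x := by
    intro s hs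
    have hsx : s < x := hs.2
    have hsub : Set.Icc s x ⊆ Set.Ioo 0 1 := fun z hz =>
      ⟨lt_of_lt_of_le hs.1 hz.1, lt_of_le_of_lt hz.2 hx.2⟩
    obtain ⟨cp, _, hc0⟩ := exists_hasDerivAt_eq_slope f (fun _ => 0) hsx
      (fun z hz => (hD z (hsub hz)).continuousAt.continuousWithinAt)
      (fun z hz => hD z (hsub (Set.Ioo_subset_Icc_self hz)))
    have hxs : x - s ≠ 0 := by intro h; linarith [sub_eq_zero.mp h]
    have := hc0.symm
    rw [div_eq_iff hxs] at this
    linarith [this]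
  have hev : f =ᶠ[𝓝[>] (0:ℝ)] fun _ => f x := by
    filter_upwards [Ioo_mem_nhdsGT_of_mem (Set.mem_Ico.mpr ⟨le_refl (0:ℝ), hx.1⟩)] with s hs
    exact key s hs
  have h1 : Tendsto (fun _ : ℝ => f x) (𝓝[>] (0:ℝ)) (𝓝 c) := hlim.congr' hev
  exact tendsto_nhds_unique tendsto_const_nhds h1

lemma tendsto_log_mul_log_one_sub :
    Tendsto (fun s : ℝ => Real.log s * Real.log (1 - s)) (𝓝[>] (0:ℝ)) (𝓝 0) := by
  have h1 : Tendsto (fun s : ℝ => s * Real.log s) (𝓝[>] (0:ℝ)) (𝓝 0) := by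
    have := Real.continuous_mul_log.tendsto 0
    simpa using this.mono_left nhdsWithin_le_nhds
  have h2 : Tendsto (fun s : ℝ => Real.log (1 - s) / s) (𝓝[>] (0:ℝ)) (𝓝 (-1)) := by
    have hd : HasDerivAt (fun y : ℝ => Real.log (1 - y)) (-1) 0 := by
      have h := (Real.hasDerivAt_log (by norm_num : (1:ℝ) - 0 ≠ 0)).comp 0
        ((hasDerivAt_id (0:ℝ)).const_sub 1)
      have h2 : ((1 - (0:ℝ))⁻¹ * -1) = -1 := by norm_num
      rw [h2] at h
      exact h
    have := hasDerivAt_iff_tendsto_slope.mp hd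
    have h3 := this.mono_left (nhdsWithin_mono 0 (fun z hz => ne_of_gt hz))
    refine h3.congr' ?_
    filter_upwards [self_mem_nhdsWithin] with s hs
    have hs0 : s ≠ 0 := ne_of_gt hs
    simp only [slope, vsub_eq_sub, sub_zero, Real.log_one, smul_eq_mul]
    field_simp
  have hmul := h1.mul h2
  rw [zero_mul] at hmul
  refine hmul.congr' ?_
  filter_upwards [self_mem_nhdsWithin] with s hs
  have hs0 : s ≠ 0 := ne_of_gt hs
  field_simp

lemma tendsto_rogersL_zero : Tendsto rogersL (𝓝[>] (0:ℝ)) (𝓝 0) := by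
  have hLi : Tendsto Li2 (𝓝[>] (0:ℝ)) (𝓝 0) := by
    have h := (li2_hasDerivAt' (x := 0) (by norm_num)).continuousAt.tendsto
    rw [li2_zero] at h
    exact h.mono_left nhdsWithin_le_nhds
  have h2 := hLi.add (tendsto_log_mul_log_one_sub.const_mul (1/2 : ℝ))
  simp only [mul_zero, add_zero] at h2
  refine h2.congr' ?_
  filter_upwards [Ioo_mem_nhdsGT_of_mem (Set.mem_Ico.mpr ⟨le_refl (0:ℝ), one_pos⟩)] with s hs
  simp only [rogersL, if_pos hs.2]
  ring

lemma tendsto_rogersL_one_sub :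
    Tendsto (fun s : ℝ => rogersL (1 - s)) (𝓝[>] (0:ℝ)) (𝓝 (π ^ 2 / 6)) := by
  have hLi : Tendsto (fun s : ℝ => Li2 (1 - s)) (𝓝[>] (0:ℝ)) (𝓝 (π ^ 2 / 6)) := by
    have hmap : Tendsto (fun s : ℝ => 1 - s) (𝓝[>] (0:ℝ)) (𝓝[Set.Icc (-1:ℝ) 1] 1) := by
      rw [tendsto_nhdsWithin_iff]
      constructor
      · have : Tendsto (fun s : ℝ => 1 - s) (𝓝 (0:ℝ)) (𝓝 (1 - 0)) :=
          (continuous_const.sub continuous_id).tendsto 0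
        rw [sub_zero] at this
        exact this.mono_left nhdsWithin_le_nhds
      · filter_upwards [Ioo_mem_nhdsGT_of_mem (Set.mem_Ico.mpr ⟨le_refl (0:ℝ), one_pos⟩)] with s hs
        exact ⟨by linarith [hs.2], by linarith [hs.1]⟩
    have hcont := (li2_continuousOn 1 (Set.mem_Icc.mpr ⟨by norm_num, le_refl 1⟩)).tendsto
    rw [li2_one] at hcont
    exact hcont.comp hmap
  have hlog : Tendsto (fun s : ℝ => Real.log (1 - s) * Real.log s) (𝓝[>] (0:ℝ)) (𝓝 0) := by
    refine tendsto_log_mul_log_one_sub.congr (fun s => mul_comm _ _)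
  have h2 := hLi.add (hlog.const_mul (1/2 : ℝ))
  rw [mul_zero, add_zero] at h2
  refine h2.congr' ?_
  filter_upwards [Ioo_mem_nhdsGT_of_mem (Set.mem_Ico.mpr ⟨le_refl (0:ℝ), one_pos⟩)] with s hs
  have h1s : 1 - s < 1 := by linarith [hs.1]
  simp only [rogersL, if_pos h1s]
  have : (1:ℝ) - (1 - s) = s := by ring
  rw [this]
  ring

lemma rogersL_reflect {x : ℝ} (hx : x ∈ Set.Ioo (0:ℝ) 1) :
    rogersL x + rogersL (1 - x) = π ^ 2 / 6 := by
  have hD : ∀ s ∈ Set.Ioo (0:ℝ) 1, HasDerivAt (fun z => rogersL z + rogersL (1 - z)) 0 s := by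
    intro s hs
    have hs' : (1:ℝ) - s ∈ Set.Ioo (0:ℝ) 1 := ⟨by linarith [hs.2], by linarith [hs.1]⟩
    have h1 := rogersL_hasDerivAt hs
    have h2 := (rogersL_hasDerivAt hs').comp s ((hasDerivAt_id s).const_sub 1)
    have e : (1:ℝ) - (1 - s) = s := by ring
    rw [e] at h2
    have h3 := h1.add (h2.congr_deriv rfl)
    have hcomp : (rogersL ∘ fun z => 1 - z) = fun z => rogersL (1 - z) := rfl
    rw [hcomp] at h3
    refine h3.congr_deriv ?_
    ring
  have hlim := tendsto_rogersL_zero.add tendsto_rogersL_one_sub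
  rw [zero_add] at hlim
  exact const_of_deriv hD hlim x hx

lemma rogers_id {s t : ℝ} (hs : s ∈ Set.Ioo (0:ℝ) 1) (ht : t ∈ Set.Ioo (0:ℝ) 1) :
    rogersL s + rogersL t =
      rogersL (s * t) + rogersL (s * (1 - t) / (1 - s * t))
        + rogersL (t * (1 - s) / (1 - s * t)) := by
  obtain ⟨ht0, ht1⟩ := ht
  set g : ℝ → ℝ := fun w => rogersL w + rogersL t - rogersL (w * t)
    - rogersL (w * (1 - t) / (1 - w * t)) - rogersL (t * (1 - w) / (1 - w * t)) with hg_def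
  have hD : ∀ z ∈ Set.Ioo (0:ℝ) 1, HasDerivAt g 0 z := by
    intro z hz
    obtain ⟨hz0, hz1⟩ := hz
    have hzt1 : z * t < 1 := by nlinarith
    have h1zt : (0:ℝ) < 1 - z * t := by linarith
    have h1z : (0:ℝ) < 1 - z := by linarith
    have h1t : (0:ℝ) < 1 - t := by linarith
    have hztIoo : z * t ∈ Set.Ioo (0:ℝ) 1 := ⟨by positivity, hzt1⟩
    have hαIoo : z * (1 - t) / (1 - z * t) ∈ Set.Ioo (0:ℝ) 1 := by
      constructor
      · positivity
      · rw [div_lt_one h1zt]; nlinarith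
    have hβIoo : t * (1 - z) / (1 - z * t) ∈ Set.Ioo (0:ℝ) 1 := by
      constructor
      · positivity
      · rw [div_lt_one h1zt]; nlinarith
    have h1 := rogersL_hasDerivAt ⟨hz0, hz1⟩
    have h2 := (rogersL_hasDerivAt hztIoo).comp z (hasDerivAt_mul_const t)
    have hαd : HasDerivAt (fun w : ℝ => w * (1 - t) / (1 - w * t))
        (((1 - t) * (1 - z * t) - z * (1 - t) * (0 - t)) / (1 - z * t) ^ 2) z :=
      (hasDerivAt_mul_const (1 - t)).div
        ((hasDerivAt_const z 1).sub (hasDerivAt_mul_const t)) (ne_of_gt h1zt)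
    have h3 := (rogersL_hasDerivAt hαIoo).comp z hαd
    have hβn : HasDerivAt (fun w : ℝ => t * (1 - w)) (0 * (1 - z) + t * (0 - 1)) z :=
      (hasDerivAt_const z t).mul ((hasDerivAt_const z 1).sub (hasDerivAt_id z))
    have hβd : HasDerivAt (fun w : ℝ => t * (1 - w) / (1 - w * t))
        (((0 * (1 - z) + t * (0 - 1)) * (1 - z * t) - t * (1 - z) * (0 - t)) / (1 - z * t) ^ 2) z :=
      hβn.div ((hasDerivAt_const z 1).sub (hasDerivAt_mul_const t)) (ne_of_gt h1zt)
    have h4 := (rogersL_hasDerivAt hβIoo).comp z hβd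
    have htot := (((h1.add_const (rogersL t)).sub h2).sub h3).sub h4
    refine htot.congr_deriv ?_
    have e1 : 1 - z * (1 - t) / (1 - z * t) = (1 - z) / (1 - z * t) := by
      field_simp; ring
    have e2 : 1 - t * (1 - z) / (1 - z * t) = (1 - t) / (1 - z * t) := by
      rw [eq_div_iff (ne_of_gt h1zt), sub_mul, div_mul_cancel₀ _ (ne_of_gt h1zt)]; ring
    rw [e1, e2]
    have hlz : Real.log (z * t) = Real.log z + Real.log t := Real.log_mul hz0.ne' ht0.ne'
    have hlα : Real.log (z * (1 - t) / (1 - z * t))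
        = Real.log z + Real.log (1 - t) - Real.log (1 - z * t) := by
      rw [Real.log_div (by positivity) (ne_of_gt h1zt), Real.log_mul hz0.ne' (ne_of_gt h1t)]
    have hlβ : Real.log (t * (1 - z) / (1 - z * t))
        = Real.log t + Real.log (1 - z) - Real.log (1 - z * t) := by
      rw [Real.log_div (by positivity) (ne_of_gt h1zt), Real.log_mul ht0.ne' (ne_of_gt h1z)]
    have hl1 : Real.log ((1 - z) / (1 - z * t)) = Real.log (1 - z) - Real.log (1 - z * t) :=
      Real.log_div (ne_of_gt h1z) (ne_of_gt h1zt)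
    have hl2 : Real.log ((1 - t) / (1 - z * t)) = Real.log (1 - t) - Real.log (1 - z * t) :=
      Real.log_div (ne_of_gt h1t) (ne_of_gt h1zt)
    rw [hlz, hlα, hlβ, hl1, hl2]
    field_simp
    ring
  have hg0 : Tendsto g (𝓝[>] (0:ℝ)) (𝓝 0) := by
    have hioo := Ioo_mem_nhdsGT_of_mem (Set.mem_Ico.mpr ⟨le_refl (0:ℝ), one_pos⟩)
    have Tc : Tendsto (fun w : ℝ => rogersL (w * t)) (𝓝[>] (0:ℝ)) (𝓝 0) := by
      refine tendsto_rogersL_zero.comp ?_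
      rw [tendsto_nhdsWithin_iff]
      constructor
      · have : Tendsto (fun w : ℝ => w * t) (𝓝 0) (𝓝 (0 * t)) :=
          (continuous_id.mul continuous_const).tendsto 0
        rw [zero_mul] at this
        exact this.mono_left nhdsWithin_le_nhds
      · filter_upwards [self_mem_nhdsWithin] with w hw
        exact mul_pos hw ht0
    have Td : Tendsto (fun w : ℝ => rogersL (w * (1 - t) / (1 - w * t))) (𝓝[>] (0:ℝ)) (𝓝 0) := by
      refine tendsto_rogersL_zero.comp ?_
      rw [tendsto_nhdsWithin_iff]
      constructor
      · have hca : ContinuousAt (fun w : ℝ => w * (1 - t) / (1 - w * t)) 0 := by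
          refine (continuousAt_id.mul continuousAt_const).div
            (continuousAt_const.sub (continuousAt_id.mul continuousAt_const)) ?_
          norm_num
        have := hca.tendsto
        simp only [zero_mul, sub_zero, zero_div] at this
        exact this.mono_left nhdsWithin_le_nhds
      · filter_upwards [hioo] with w hw
        have hwt : w * t < 1 := by nlinarith [hw.1, hw.2]
        have h1t : (0:ℝ) < 1 - t := by linarith
        have h1wt : (0:ℝ) < 1 - w * t := by linarith
        exact div_pos (mul_pos hw.1 h1t) h1wt
    have Te : Tendsto (fun w : ℝ => rogersL (t * (1 - w) / (1 - w * t))) (𝓝[>] (0:ℝ))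
        (𝓝 (rogersL t)) := by
      have hca : ContinuousAt (fun w : ℝ => t * (1 - w) / (1 - w * t)) 0 := by
        refine (continuousAt_const.mul (continuousAt_const.sub continuousAt_id)).div
          (continuousAt_const.sub (continuousAt_id.mul continuousAt_const)) ?_
        norm_num
      have hmap := hca.tendsto
      simp only [zero_mul, sub_zero, mul_one, div_one] at hmap
      exact ((rogersL_hasDerivAt ⟨ht0, ht1⟩).continuousAt.tendsto.comp
        (hmap.mono_left nhdsWithin_le_nhds))
    have Tb : Tendsto (fun _ : ℝ => rogersL t) (𝓝[>] (0:ℝ)) (𝓝 (rogersL t)) :=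
      tendsto_const_nhds
    have htotal := (((tendsto_rogersL_zero.add Tb).sub Tc).sub Td).sub Te
    have : (0 : ℝ) + rogersL t - 0 - 0 - rogersL t = 0 := by ring
    rw [this] at htotal
    exact htotal
  have := const_of_deriv hD hg0 s hs
  rw [hg_def] at this
  simp only at this
  linarith [this]

lemma rogersL_inv {z : ℝ} (hz : 1 < z) : rogersL z = π ^ 2 / 3 - rogersL (1 / z) := by
  have h1 : ¬ z < 1 := not_lt.mpr hz.le
  have h2 : 1 / z < 1 := by
    rw [div_lt_one (lt_trans one_pos hz)]
    exact hz
  rw [rogersL, if_neg h1, rogersL, if_pos h2]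

lemma five_term_lt {u v : ℝ} (hu : u ∈ Set.Ioo (0:ℝ) 1) (hv : v ∈ Set.Ioo (0:ℝ) 1)
    (hvu : v < u) :
    rogersL u - rogersL v + rogersL (v / u) - rogersL ((1 - v) / (1 - u))
      + rogersL (u * (1 - v) / (v * (1 - u))) = π ^ 2 / 6 := by
  obtain ⟨hu0, hu1⟩ := hu
  obtain ⟨hv0, hv1⟩ := hv
  have h1u : (0:ℝ) < 1 - u := by linarith
  have h1v : (0:ℝ) < 1 - v := by linarith
  have ht : v / u ∈ Set.Ioo (0:ℝ) 1 := ⟨div_pos hv0 hu0, (div_lt_one hu0).mpr hvu⟩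
  have hR := rogers_id ⟨hu0, hu1⟩ ht
  have e0 : u * (v / u) = v := by field_simp
  rw [e0] at hR
  have e2 : u * (1 - v / u) / (1 - v) = (u - v) / (1 - v) := by
    field_simp
  have e3 : v / u * (1 - u) / (1 - v) = v * (1 - u) / (u * (1 - v)) := by
    field_simp
  rw [e2, e3] at hR
  have hw : (u - v) / (1 - v) ∈ Set.Ioo (0:ℝ) 1 := by
    constructor
    · exact div_pos (by linarith) h1v
    · rw [div_lt_one h1v]; linarith
  have hRef := rogersL_reflect hw
  have e4 : 1 - (u - v) / (1 - v) = (1 - u) / (1 - v) := by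
    field_simp
    ring
  rw [e4] at hRef
  have hq : 1 < (1 - v) / (1 - u) := by
    rw [lt_div_iff₀ h1u]; linarith
  have hIq := rogersL_inv hq
  rw [one_div_div] at hIq
  have hp : 1 < u * (1 - v) / (v * (1 - u)) := by
    rw [lt_div_iff₀ (by positivity)]; nlinarith
  have hIp := rogersL_inv hp
  rw [one_div_div] at hIp
  linarith [hR, hRef, hIq, hIp]

lemma five_term {u v : ℝ} (hu : u ∈ Set.Ioo (0:ℝ) 1) (hv : v ∈ Set.Ioo (0:ℝ) 1)
    (huv : u ≠ v) :
    rogersL u - rogersL v + rogersL (v / u) - rogersL ((1 - v) / (1 - u))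
      + rogersL (u * (1 - v) / (v * (1 - u))) = π ^ 2 / 6 := by
  rcases lt_or_gt_of_ne huv with h | h
  · -- u < v
    have key := five_term_lt hv hu h
    obtain ⟨hu0, hu1⟩ := hu
    obtain ⟨hv0, hv1⟩ := hv
    have h1u : (0:ℝ) < 1 - u := by linarith
    have h1v : (0:ℝ) < 1 - v := by linarith
    have hq1 : 1 < v / u := by rw [lt_div_iff₀ hu0]; linarith
    have hI1 := rogersL_inv hq1
    rw [one_div_div] at hI1
    have hq2 : 1 < (1 - u) / (1 - v) := by rw [lt_div_iff₀ h1v]; linarith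
    have hI2 := rogersL_inv hq2
    rw [one_div_div] at hI2
    have hq3 : 1 < v * (1 - u) / (u * (1 - v)) := by
      rw [lt_div_iff₀ (by positivity)]; nlinarith
    have hI3 := rogersL_inv hq3
    rw [one_div_div] at hI3
    linarith [key, hI1, hI2, hI3]
  · exact five_term_lt hu hv h

set_option maxHeartbeats 1600000

theorem five_term_chain_step (l a b c d : ℤ) (hl : 0 < l)
    (ha : 0 < a) (hb : 0 < b) (hd : 0 < d) (hc : 0 ≤ c)
    (hdet : a * d - b * c = l)
    (x y : ℝ) (hx : 0 < x) (hy : 0 < y) (hxy : x ≠ y)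
    (h1 : 0 < (x + c / a) / (x + d / b)) (h1' : (x + c / a) / (x + d / b) ≠ 1)
    (h2 : 0 < (y + c / a) / (y + d / b)) (h2' : (y + c / a) / (y + d / b) ≠ 1)
    (h3 : 0 < ((a * y + c) * (b * x + d)) / ((b * y + d) * (a * x + c)))
    (h3' : ((a * y + c) * (b * x + d)) / ((b * y + d) * (a * x + c)) ≠ 1)
    (h4 : 0 < (b * x + d) / (b * y + d)) (h4' : (b * x + d) / (b * y + d) ≠ 1)
    (h5 : 0 < (a * x + c) / (a * y + c)) (h5' : (a * x + c) / (a * y + c) ≠ 1) :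
    ∃ k : ℤ,
      rogersL ((x + c / a) / (x + d / b)) - rogersL ((y + c / a) / (y + d / b))
        + rogersL (((a * y + c) * (b * x + d)) / ((b * y + d) * (a * x + c)))
        - (rogersL ((b * x + d) / (b * y + d)) - rogersL ((a * x + c) / (a * y + c)))
      = k * (Real.pi ^ 2 / 6) := by
  have ha' : (0:ℝ) < (a:ℝ) := by exact_mod_cast ha
  have hb' : (0:ℝ) < (b:ℝ) := by exact_mod_cast hb
  have hd' : (0:ℝ) < (d:ℝ) := by exact_mod_cast hd
  have hc' : (0:ℝ) ≤ (c:ℝ) := by exact_mod_cast hc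
  have hl' : (0:ℝ) < (l:ℝ) := by exact_mod_cast hl
  have hdet' : (a:ℝ) * d - (b:ℝ) * c = (l:ℝ) := by exact_mod_cast hdet
  have hdetpos : (0:ℝ) < (a:ℝ) * d - (b:ℝ) * c := by rw [hdet']; exact hl'
  have hax : (0:ℝ) < (a:ℝ) * x + c := by nlinarith
  have hbx : (0:ℝ) < (b:ℝ) * x + d := by nlinarith
  have hay : (0:ℝ) < (a:ℝ) * y + c := by nlinarith
  have hby : (0:ℝ) < (b:ℝ) * y + d := by nlinarith
  set U : ℝ := (b:ℝ) * ((a:ℝ) * x + c) / ((a:ℝ) * ((b:ℝ) * x + d)) with hU_def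
  set V : ℝ := (b:ℝ) * ((a:ℝ) * y + c) / ((a:ℝ) * ((b:ℝ) * y + d)) with hV_def
  have hUpos : (0:ℝ) < U := div_pos (mul_pos hb' hax) (mul_pos ha' hbx)
  have hVpos : (0:ℝ) < V := div_pos (mul_pos hb' hay) (mul_pos ha' hby)
  have hU : U ∈ Set.Ioo (0:ℝ) 1 := by
    refine ⟨hUpos, ?_⟩
    rw [hU_def, div_lt_one (mul_pos ha' hbx)]
    nlinarith
  have hV : V ∈ Set.Ioo (0:ℝ) 1 := by
    refine ⟨hVpos, ?_⟩
    rw [hV_def, div_lt_one (mul_pos ha' hby)]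
    nlinarith
  have hUV : U ≠ V := by
    intro h
    apply hxy
    rw [hU_def, hV_def, div_eq_div_iff (mul_pos ha' hbx).ne' (mul_pos ha' hby).ne'] at h
    have key : ((a:ℝ) * d - (b:ℝ) * c) * ((a:ℝ) * (b:ℝ)) * (x - y) = 0 := by
      linear_combination h
    rcases mul_eq_zero.mp key with h' | h'
    · exfalso
      rcases mul_eq_zero.mp h' with h'' | h''
      · exact (ne_of_gt hdetpos) h''
      · exact (ne_of_gt (mul_pos ha' hb')) h''
    · linarith [sub_eq_zero.mp h']
  have hdenx : (0:ℝ) < x + (d:ℝ) / b := by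
    have := div_pos hd' hb'; linarith
  have hdeny : (0:ℝ) < y + (d:ℝ) / b := by
    have := div_pos hd' hb'; linarith
  have A1 : (x + (c:ℝ) / a) / (x + (d:ℝ) / b) = U := by
    rw [hU_def, div_eq_div_iff hdenx.ne' (mul_pos ha' hbx).ne']
    field_simp
  have A2 : (y + (c:ℝ) / a) / (y + (d:ℝ) / b) = V := by
    rw [hV_def, div_eq_div_iff hdeny.ne' (mul_pos ha' hby).ne']
    field_simp
  have hdne : ((a:ℝ) * d - (b:ℝ) * c) ≠ 0 := ne_of_gt hdetpos
  have A3 : (((a:ℝ) * y + c) * ((b:ℝ) * x + d)) / (((b:ℝ) * y + d) * ((a:ℝ) * x + c))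
      = V / U := by
    rw [hU_def, hV_def]
    field_simp
  have e1u : 1 - U = ((a:ℝ) * d - (b:ℝ) * c) / ((a:ℝ) * ((b:ℝ) * x + d)) := by
    rw [hU_def]
    field_simp
    ring
  have e1v : 1 - V = ((a:ℝ) * d - (b:ℝ) * c) / ((a:ℝ) * ((b:ℝ) * y + d)) := by
    rw [hV_def]
    field_simp
    ring
  have A4 : ((b:ℝ) * x + d) / ((b:ℝ) * y + d) = (1 - V) / (1 - U) := by
    rw [e1u, e1v]
    have hdne' : (d:ℝ) * a - b * c ≠ 0 := by rw [mul_comm (d:ℝ)]; exact hdne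
    field_simp
  have A5 : ((a:ℝ) * x + c) / ((a:ℝ) * y + c) = U * (1 - V) / (V * (1 - U)) := by
    rw [e1u, e1v, hU_def, hV_def]
    have hden2 : (0:ℝ) < (b:ℝ) * ((a:ℝ) * y + c) / ((a:ℝ) * ((b:ℝ) * y + d))
        * (((a:ℝ) * d - (b:ℝ) * c) / ((a:ℝ) * ((b:ℝ) * x + d))) :=
      mul_pos (div_pos (mul_pos hb' hay) (mul_pos ha' hby))
        (div_pos hdetpos (mul_pos ha' hbx))
    rw [div_eq_div_iff hay.ne' hden2.ne']
    field_simp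
  refine ⟨1, ?_⟩
  rw [A1, A2, A3, A4, A5]
  have hFT := five_term hU hV hUV
  push_cast
  linarith [hFT]
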